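/- Let E be a Banach space, P, Q ∈ B(E) idempotents with P + Q = I_E and PQ = 0 = QP, X a nonzero Banach space, and ψ : B(E) → B(X) a surjective algebra homomorphism. If ψ(P) = 0 and ψ(Q) = I_X, and the induced surjective homomorphism θ : B(Ran Q) → B(X), θ(T) = ψ(Q|_G ∘ T ∘ Q|^G) (G = Ran Q), is injective, then ψ is injective. -/

import Mathlib

open Function

/-- Let `E` be a Banach space, `P, Q ∈ B(E)` idempotents with `P + Q = I`,
`PQ = 0 = QP`, `X` a nonzero Banach space and `ψ : B(E) → B(X)` a surjective algebra
homomorphism with `ψ(P) = 0` and `ψ(Q) = I`. If the induced homomorphism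
`θ : B(Ran Q) → B(X)`, `θ(T) = ψ(Q|_G ∘ T ∘ Q|^G)` (`G = Ran Q`), is injective, then `ψ` is
injective. -/
theorem injective_of_compression_injective
    {E X : Type*}
    [NormedAddCommGroup E] [NormedSpace ℂ E] [CompleteSpace E]
    [NormedAddCommGroup X] [NormedSpace ℂ X] [CompleteSpace X] [Nontrivial X]
    (P Q : E →L[ℂ] E) (hP : P * P = P) (hQ : Q * Q = Q)
    (hPQ : P + Q = 1) (hPQ0 : P * Q = 0) (hQP0 : Q * P = 0)
    (ψ : (E →L[ℂ] E) →ₐ[ℂ] (X →L[ℂ] X)) (hsurj : Surjective ψ)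
    (hψP : ψ P = 0) (hψQ : ψ Q = 1)
    (hθ : Injective (fun T : (↥(LinearMap.range (Q : E →ₗ[ℂ] E)) →L[ℂ]
        ↥(LinearMap.range (Q : E →ₗ[ℂ] E))) =>
      ψ ((LinearMap.range (Q : E →ₗ[ℂ] E)).subtypeL ∘L T ∘L
        Q.codRestrict (LinearMap.range (Q : E →ₗ[ℂ] E))
          (fun x => LinearMap.mem_range_self (Q : E →ₗ[ℂ] E) x)))) :
    Injective ψ := by
  set G := LinearMap.range (Q : E →ₗ[ℂ] E) with hG
  -- key: kernel elements are killed by compression with Q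
  have key : ∀ A : E →L[ℂ] E, ψ A = 0 → Q ∘L A ∘L Q = 0 := by
    intro A hA
    set T : ↥G →L[ℂ] ↥G :=
      (Q.codRestrict G (fun x => LinearMap.mem_range_self (Q : E →ₗ[ℂ] E) x)) ∘L A ∘L G.subtypeL
      with hT
    have hcomp : G.subtypeL ∘L T ∘L
        Q.codRestrict G (fun x => LinearMap.mem_range_self (Q : E →ₗ[ℂ] E) x)
        = Q ∘L A ∘L Q := by
      ext x; simp [hT]
    have hθT : ψ (G.subtypeL ∘L T ∘L
        Q.codRestrict G (fun x => LinearMap.mem_range_self (Q : E →ₗ[ℂ] E) x)) = 0 := by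
      rw [hcomp]
      have : Q ∘L A ∘L Q = Q * A * Q := rfl
      rw [this, map_mul, map_mul, hψQ, hA, mul_zero, zero_mul]
    have hθ0 : ψ (G.subtypeL ∘L (0 : ↥G →L[ℂ] ↥G) ∘L
        Q.codRestrict G (fun x => LinearMap.mem_range_self (Q : E →ₗ[ℂ] E) x)) = 0 := by
      have : G.subtypeL ∘L (0 : ↥G →L[ℂ] ↥G) ∘L
          Q.codRestrict G (fun x => LinearMap.mem_range_self (Q : E →ₗ[ℂ] E) x) = 0 := by
        ext x; simp
      rw [this, map_zero]
    have hT0 : T = 0 := hθ (hθT.trans hθ0.symm)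
    rw [← hcomp, hT0]
    ext x; simp
  -- ψ injective iff kernel trivial
  rw [injective_iff_map_eq_zero]
  intro A hA
  by_contra hA0
  -- find u with A u ≠ 0
  obtain ⟨u, hu⟩ : ∃ u, A u ≠ 0 := by
    by_contra h
    push_neg at h
    exact hA0 (ContinuousLinearMap.ext fun x => by simp [h x])
  -- Q ≠ 0
  have hQ0 : Q ≠ 0 := by
    intro h
    rw [h, map_zero] at hψQ
    exact one_ne_zero hψQ.symm
  obtain ⟨u₀, hu₀⟩ : ∃ u₀, Q u₀ ≠ 0 := by
    by_contra h
    push_neg at h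
    exact hQ0 (ContinuousLinearMap.ext fun x => by simp [h x])
  set x := Q u₀ with hx
  obtain ⟨η, hη⟩ := SeparatingDual.exists_eq_one (R := ℂ) hu
  obtain ⟨ξ, hξ⟩ := SeparatingDual.exists_eq_one (R := ℂ) hu₀
  -- rank one operator R = ξ ⊗ x lies in ker ψ
  set B : E →L[ℂ] E := η.smulRight x with hB
  set C : E →L[ℂ] E := ξ.smulRight u with hC
  set R : E →L[ℂ] E := B ∘L A ∘L C with hR
  have hψR : ψ R = 0 := by
    have : R = B * A * C := by rw [hR]; rfl
    rw [this, map_mul, map_mul, hA, mul_zero, zero_mul]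
  have hQRQ : Q ∘L R ∘L Q = 0 := key R hψR
  -- evaluate at u₀ to get contradiction
  have hQx : Q x = x := by
    have := congrFun (congrArg DFunLike.coe hQ) u₀
    simpa [hx] using this
  have : (Q ∘L R ∘L Q) u₀ = x := by
    simp [hR, hB, hC, hη, hξ, hQx]
    rw [← hx, hξ, one_smul]
  rw [hQRQ] at this
  simp at this
  exact hu₀ this.symm
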